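/- Let Δ ∈ ℝ^{N×D}, let Δ̄ ∈ ℝ^{1×D} be its column-wise averages, and let A = [-1_{N-1} | I_{N-1}] ∈ ℝ^{(N-1)×N}. Then vec(AΔ)^T Σ^{-1} vec(AΔ) = (1/σ²)‖Δ - 1_N Δ̄‖_F², where Σ ∈ ℝ^{(N-1)D × (N-1)D} is the block-diagonal matrix with D diagonal blocks each equal to B = σ² A A^T, and σ > 0. -/

import Mathlib

open Matrix Finset

lemma key_var (n : ℕ) (x : Fin (n+1) → ℝ) :
    (∑ i : Fin n, (x i.succ - x 0)^2) - (∑ i : Fin n, (x i.succ - x 0))^2 / ((n:ℝ)+1)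
    = ∑ i, (x i - (∑ j, x j)/((n:ℝ)+1))^2 := by
  have hpos : (0:ℝ) < (n:ℝ)+1 := by positivity
  have hS : ∑ i : Fin n, x i.succ = (∑ j, x j) - x 0 := by
    rw [Fin.sum_univ_succ]; ring
  have hQ : ∑ i : Fin n, (x i.succ)^2 = (∑ j, (x j)^2) - (x 0)^2 := by
    rw [Fin.sum_univ_succ (f := fun j => (x j)^2)]; ring
  have e1 : ∑ i : Fin n, (x i.succ - x 0)^2
      = (∑ j, (x j)^2) - (x 0)^2 - 2*(x 0)*((∑ j, x j) - x 0) + n*(x 0)^2 := by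
    have h : ∀ i : Fin n, (x i.succ - x 0)^2
        = (x i.succ)^2 - 2*(x 0)*(x i.succ) + (x 0)^2 := fun i => by ring
    simp_rw [h]
    rw [Finset.sum_add_distrib, Finset.sum_sub_distrib, ← Finset.mul_sum,
      Finset.sum_const, hQ, hS]
    simp [nsmul_eq_mul]
  have e2 : ∑ i : Fin (n+1), (x i - (∑ j, x j)/((n:ℝ)+1))^2
      = (∑ j, (x j)^2) - 2*((∑ j, x j)/((n:ℝ)+1))*(∑ j, x j)
        + ((n:ℝ)+1)*((∑ j, x j)/((n:ℝ)+1))^2 := by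
    have h : ∀ i : Fin (n+1), (x i - (∑ j, x j)/((n:ℝ)+1))^2
        = (x i)^2 - 2*((∑ j, x j)/((n:ℝ)+1))*(x i) + ((∑ j, x j)/((n:ℝ)+1))^2 :=
      fun i => by ring
    simp_rw [h]
    rw [Finset.sum_add_distrib, Finset.sum_sub_distrib, ← Finset.mul_sum,
      Finset.sum_const]
    simp [nsmul_eq_mul]
  have hW : ∑ i : Fin n, (x i.succ - x 0) = (∑ j, x j) - ((n:ℝ)+1) * x 0 := by
    rw [Finset.sum_sub_distrib, Finset.sum_const, hS]
    simp [nsmul_eq_mul]; ring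
  rw [e1, e2, hW]
  field_simp
  ring

/-- Quadratic-form identity behind the tight translation-invariance certificate:
with `A = [-1 | I_{N-1}]`, `B = σ² A Aᵀ`, `Σ = blockdiag(B, …, B)` and
`v = vec(AΔ)`, one has `vᵀ Σ⁻¹ v = (1/σ²) ‖Δ - 1_N Δ̄‖_F²`. -/
theorem stmt18 (n D : ℕ) (hn : 1 ≤ n) (σ : ℝ) (hσ : 0 < σ)
    (Δ : Matrix (Fin (n + 1)) (Fin D) ℝ)
    (A : Matrix (Fin n) (Fin (n + 1)) ℝ)
    (hA : ∀ i j, A i j = if (j : ℕ) = 0 then -1 else if (j : ℕ) = (i : ℕ) + 1 then 1 else 0)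
    (B : Matrix (Fin n) (Fin n) ℝ) (hB : B = σ ^ 2 • (A * Aᵀ))
    (Sig : Matrix (Fin D × Fin n) (Fin D × Fin n) ℝ)
    (hSig : ∀ p q, Sig p q = if p.1 = q.1 then B p.2 q.2 else 0)
    (v : Fin D × Fin n → ℝ)
    (hv : ∀ p, v p = A.mulVec (fun i => Δ i p.1) p.2)
    (mean : Fin D → ℝ) (hmean : ∀ d, mean d = (∑ i, Δ i d) / (n + 1)) :
    dotProduct v (Sig⁻¹.mulVec v)
      = (1 / σ ^ 2) * ∑ i, ∑ d, (Δ i d - mean d) ^ 2 := by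
  have hσ2 : (σ:ℝ)^2 ≠ 0 := by positivity
  have hn1 : ((n:ℝ)+1) ≠ 0 := by positivity
  -- entries of B
  have hBe : ∀ i j, B i j = σ^2 * (1 + if i = j then 1 else 0) := by
    intro i j
    rw [hB]
    simp only [Matrix.smul_apply, Matrix.mul_apply, Matrix.transpose_apply, smul_eq_mul]
    congr 1
    rw [Fin.sum_univ_succ]
    simp only [hA, Fin.val_zero, Fin.val_succ]
    simp only [if_pos rfl, Nat.succ_ne_zero, if_false, Nat.add_right_cancel_iff]
    have : ∀ k : Fin n, ((if (k:ℕ) = (i:ℕ) then (1:ℝ) else 0) * (if (k:ℕ) = (j:ℕ) then 1 else 0))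
        = if k = i then (if i = j then 1 else 0) else 0 := by
      intro k
      simp only [Fin.val_eq_val]
      by_cases h1 : k = i
      · subst h1; simp
      · simp [h1]
    simp_rw [this]
    rw [Finset.sum_ite_eq' univ i]
    simp
  -- the explicit inverse block
  set Binv : Matrix (Fin n) (Fin n) ℝ :=
    fun i j => (1/σ^2) * ((if i = j then 1 else 0) - 1/((n:ℝ)+1)) with hBinv
  have hBB : B * Binv = 1 := by
    ext i j
    rw [Matrix.mul_apply]; simp only [hBe, hBinv]
    have : ∀ k : Fin n, σ^2 * (1 + if i = k then 1 else 0) *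
        ((1/σ^2) * ((if k = j then 1 else 0) - 1/((n:ℝ)+1)))
        = ((if k = j then (1:ℝ) else 0) + (if i = k then 1 else 0) * (if k = j then 1 else 0))
          - (1/((n:ℝ)+1)) * (1 + if i = k then 1 else 0) := by
      intro k
      field_simp
    simp_rw [this]
    rw [Finset.sum_sub_distrib, Finset.sum_add_distrib, ← Finset.mul_sum]
    have s1 : ∑ k : Fin n, (if k = j then (1:ℝ) else 0) = 1 := by
      rw [Finset.sum_ite_eq' univ j]; simp
    have s2 : ∑ k : Fin n, (if i = k then (1:ℝ) else 0) * (if k = j then 1 else 0)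
        = if i = j then 1 else 0 := by
      have : ∀ k : Fin n, (if i = k then (1:ℝ) else 0) * (if k = j then 1 else 0)
          = if k = i then (if i = j then (1:ℝ) else 0) else 0 := by
        intro k
        by_cases h1 : k = i
        · subst h1; simp
        · rw [if_neg (fun h => h1 h.symm), if_neg h1, zero_mul]
      simp_rw [this]
      rw [Finset.sum_ite_eq' univ i]; simp
    have s3 : ∑ k : Fin n, ((1:ℝ) + if i = k then 1 else 0) = (n:ℝ) + 1 := by
      rw [Finset.sum_add_distrib, Finset.sum_const]
      have : ∑ k : Fin n, (if i = k then (1:ℝ) else 0) = 1 := by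
        simp_rw [eq_comm (a := i)]
        rw [Finset.sum_ite_eq' univ i]; simp
      rw [this]; simp [nsmul_eq_mul]
    rw [s1, s2, s3, Matrix.one_apply]
    by_cases h : i = j <;> field_simp [h] <;> ring
  -- the explicit inverse of Sig
  set C : Matrix (Fin D × Fin n) (Fin D × Fin n) ℝ :=
    fun p q => if p.1 = q.1 then Binv p.2 q.2 else 0 with hC
  have hSC : Sig * C = 1 := by
    ext p q
    rw [Matrix.mul_apply, Fintype.sum_prod_type]
    have key : ∀ d : Fin D, (∑ i : Fin n, Sig p (d, i) * C (d, i) q)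
        = if d = p.1 then (if p.1 = q.1 then (B * Binv) p.2 q.2 else 0) else 0 := by
      intro d
      by_cases hd : d = p.1
      · rw [if_pos hd]
        by_cases hq : p.1 = q.1
        · rw [if_pos hq, Matrix.mul_apply]
          apply Finset.sum_congr rfl
          intro i _
          simp only [hSig, hC]
          rw [if_pos hd.symm, if_pos (hd.trans hq)]
        · rw [if_neg hq]
          apply Finset.sum_eq_zero
          intro i _
          simp only [hC]
          rw [if_neg (fun h : d = q.1 => hq (hd ▸ h)), mul_zero]
      · rw [if_neg hd]
        apply Finset.sum_eq_zero
        intro i _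
        rw [hSig, if_neg (fun h => hd h.symm), zero_mul]
    simp_rw [key]
    rw [Finset.sum_ite_eq' univ p.1]
    rw [hBB, Matrix.one_apply, Matrix.one_apply]
    by_cases h1 : p.1 = q.1 <;> by_cases h2 : p.2 = q.2 <;>
      simp [Prod.ext_iff, h1, h2]
  have hinv : Sig⁻¹ = C := Matrix.inv_eq_right_inv hSC
  -- explicit form of v
  have hv' : ∀ (d : Fin D) (i : Fin n), v (d, i) = Δ i.succ d - Δ 0 d := by
    intro d i
    rw [hv]
    simp only [Matrix.mulVec, dotProduct]
    rw [Fin.sum_univ_succ]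
    simp only [hA, Fin.val_zero, Fin.val_succ]
    simp only [if_pos rfl, Nat.succ_ne_zero, if_false, Nat.add_right_cancel_iff]
    have : ∀ k : Fin n, (if (k:ℕ) = (i:ℕ) then (1:ℝ) else 0) * Δ k.succ d
        = if k = i then Δ k.succ d else 0 := by
      intro k
      simp only [Fin.val_eq_val]
      by_cases h : k = i <;> simp [h]
    simp_rw [this]
    rw [Finset.sum_ite_eq' univ i]
    simp
    ring
  -- the quadratic form per block
  rw [hinv]
  have hquad : dotProduct v (C.mulVec v)
      = ∑ d : Fin D, (1/σ^2) *
          ((∑ i : Fin n, (v (d, i))^2) - (∑ i : Fin n, v (d, i))^2 / ((n:ℝ)+1)) := by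
    rw [dotProduct, Fintype.sum_prod_type]
    apply Finset.sum_congr rfl
    intro d _
    have hmv : ∀ i : Fin n, C.mulVec v (d, i)
        = (1/σ^2) * (v (d, i) - (∑ j : Fin n, v (d, j)) / ((n:ℝ)+1)) := by
      intro i
      rw [Matrix.mulVec, dotProduct, Fintype.sum_prod_type]
      have key2 : ∀ e : Fin D, (∑ j : Fin n, C (d, i) (e, j) * v (e, j))
          = if e = d then (∑ j : Fin n, Binv i j * v (d, j)) else 0 := by
        intro e
        by_cases he : e = d
        · subst he
          rw [if_pos rfl]
          apply Finset.sum_congr rfl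
          intro j _
          simp [hC]
        · rw [if_neg he]
          apply Finset.sum_eq_zero
          intro j _
          rw [hC]
          simp only
          rw [if_neg (fun h => he h.symm), zero_mul]
      simp_rw [key2]
      rw [Finset.sum_ite_eq' univ d]
      simp only [Finset.mem_univ, if_true]
      have : ∀ j : Fin n, Binv i j * v (d, j)
          = (1/σ^2) * ((if j = i then v (d, j) else 0) - v (d, j) / ((n:ℝ)+1)) := by
        intro j
        rw [hBinv]
        simp only
        by_cases h : i = j
        · subst h; simp; ring
        · rw [if_neg h, if_neg (fun hh => h hh.symm)]; ring
      simp_rw [this]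
      rw [← Finset.mul_sum, Finset.sum_sub_distrib, Finset.sum_ite_eq' univ i]
      simp only [Finset.mem_univ, if_true]
      rw [← Finset.sum_div]
    simp_rw [hmv]
    set S := ∑ j : Fin n, v (d, j) with hS
    have expand : ∀ i : Fin n, v (d, i) * ((1/σ^2) * (v (d, i) - S / ((n:ℝ)+1)))
        = (1/σ^2) * (v (d, i))^2 - ((1/σ^2)/((n:ℝ)+1)) * (v (d, i) * S) := fun i => by ring
    simp_rw [expand]
    rw [Finset.sum_sub_distrib, ← Finset.mul_sum, ← Finset.mul_sum, ← Finset.sum_mul, ← hS]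
    field_simp
  rw [hquad]
  have swap : ∑ i : Fin (n+1), ∑ d : Fin D, (Δ i d - mean d)^2
      = ∑ d : Fin D, ∑ i : Fin (n+1), (Δ i d - mean d)^2 := Finset.sum_comm
  rw [swap, Finset.mul_sum]
  apply Finset.sum_congr rfl
  intro d _
  congr 1
  simp_rw [hv' d, hmean d]
  exact key_var n (fun k => Δ k d)
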